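/- Lower bound via projection onto the orthogonal complement: for all γ1, γ2, γ3 ∈ S² with γ1, γ2 linearly independent, I_AAB(γ3; γ1, γ2) ≥ ‖P_{span{γ1,γ2}⊥}(γ3)‖, where P_{span{γ1,γ2}⊥} denotes the orthogonal projection of ℝ³ onto the orthogonal complement of span{γ1, γ2}. -/

import Mathlib

noncomputable section

open scoped RealInnerProductSpace

/-- ℝ³ as a Euclidean space. -/
abbrev V3 : Type := EuclideanSpace ℝ (Fin 3)

/-- The unit sphere S² in ℝ³. -/
def unitSphere : Set V3 := {v : V3 | ‖v‖ = 1}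

/-- γ₁, γ₂, γ₃ are cycle-consistent if λ₁γ₁ + λ₂γ₂ + λ₃γ₃ = 0 for some λ₁, λ₂, λ₃ > 0. -/
def CycleConsistent (γ₁ γ₂ γ₃ : V3) : Prop :=
  ∃ l₁ l₂ l₃ : ℝ, 0 < l₁ ∧ 0 < l₂ ∧ 0 < l₃ ∧ l₁ • γ₁ + l₂ • γ₂ + l₃ • γ₃ = 0

/-- The cycle-consistency region Ω(γ₁,γ₂) = {γ ∈ S² : γ₁, γ₂, γ are cycle-consistent}. -/
def consistencyRegion (γ₁ γ₂ : V3) : Set V3 :=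
  {γ ∈ unitSphere | CycleConsistent γ₁ γ₂ γ}

/-- Great-circle distance d_g(u,v) = arccos⟨u,v⟩ for unit vectors. -/
def dg (u v : V3) : ℝ := Real.arccos ⟪u, v⟫

/-- The AAB inconsistency I_AAB(γ₃; γ₁, γ₂) = inf_{γ ∈ Ω(γ₁,γ₂)} d_g(γ₃, γ). -/
def IAAB (γ₃ γ₁ γ₂ : V3) : ℝ := sInf ((dg γ₃) '' consistencyRegion γ₁ γ₂)

lemma arccos_ge_of_le_cos {t a : ℝ} (ht : -1 ≤ t) (ha0 : 0 ≤ a) (haπ : a ≤ Real.pi)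
    (h : t ≤ Real.cos a) : a ≤ Real.arccos t := by
  have h1 : Real.arcsin t ≤ Real.arcsin (Real.cos a) := Real.monotone_arcsin h
  rw [Real.arccos]
  have h2 : Real.arcsin (Real.cos a) = Real.pi / 2 - a := by
    rw [← Real.sin_pi_div_two_sub]
    exact Real.arcsin_sin (by linarith) (by linarith)
  linarith


/-- Lower bound via projection onto the orthogonal complement: for all
γ₁, γ₂, γ₃ ∈ S² with γ₁, γ₂ linearly independent,
I_AAB(γ₃; γ₁, γ₂) ≥ ‖P_{span{γ₁,γ₂}⊥}(γ₃)‖. -/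
theorem stmt_12 (γ₁ γ₂ γ₃ : V3) (h₁ : γ₁ ∈ unitSphere) (h₂ : γ₂ ∈ unitSphere)
    (h₃ : γ₃ ∈ unitSphere) (hli : LinearIndependent ℝ ![γ₁, γ₂]) :
    IAAB γ₃ γ₁ γ₂ ≥ ‖(Submodule.orthogonalProjectionOnto (Submodule.span ℝ {γ₁, γ₂})ᗮ γ₃ : V3)‖ := by
  set S := Submodule.span ℝ ({γ₁, γ₂} : Set V3) with hS
  set w : V3 := (Submodule.orthogonalProjectionOnto Sᗮ γ₃ : V3) with hw
  set u : V3 := (Submodule.orthogonalProjectionOnto S γ₃ : V3) with hu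
  have hdecomp : γ₃ = u + w := by
    rw [hu, hw]
    simp
  have hwmem : w ∈ Sᗮ := (Submodule.orthogonalProjectionOnto Sᗮ γ₃).2
  have humem : u ∈ S := (Submodule.orthogonalProjectionOnto S γ₃).2
  have huw : ⟪u, w⟫ = 0 := Submodule.inner_right_of_mem_orthogonal humem hwmem
  have hnorm3 : ‖γ₃‖ = 1 := h₃
  have hpyth : ‖u‖^2 + ‖w‖^2 = 1 := by
    have h := norm_add_sq_real u w
    rw [← hdecomp, huw, hnorm3] at h
    nlinarith
  have ha0 : 0 ≤ ‖w‖ := norm_nonneg w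
  have ha1 : ‖w‖ ≤ 1 := by nlinarith [norm_nonneg u]
  have hπ : (3:ℝ) < Real.pi := Real.pi_gt_three
  -- nonemptiness of the consistency region
  have hsne : γ₁ + γ₂ ≠ 0 := by
    intro h
    have h2 := Fintype.linearIndependent_iff.mp hli ![1, 1] (by
      simp [Fin.sum_univ_two, h]) 0
    norm_num at h2
  have hsnorm : ‖γ₁ + γ₂‖ ≠ 0 := norm_ne_zero_iff.mpr hsne
  set γ₀ : V3 := -(‖γ₁ + γ₂‖⁻¹ • (γ₁ + γ₂)) with hγ₀
  have hγ₀S : γ₀ ∈ consistencyRegion γ₁ γ₂ := by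
    constructor
    · show ‖γ₀‖ = 1
      rw [hγ₀, norm_neg, norm_smul, norm_inv, norm_norm]
      field_simp
    · exact ⟨1, 1, ‖γ₁ + γ₂‖, one_pos, one_pos, by positivity, by
        rw [hγ₀, smul_neg, smul_smul, mul_inv_cancel₀ hsnorm]
        module⟩
  have hne : ((dg γ₃) '' consistencyRegion γ₁ γ₂).Nonempty :=
    ⟨dg γ₃ γ₀, Set.mem_image_of_mem _ hγ₀S⟩
  refine le_csInf hne ?_
  rintro b ⟨γ, ⟨hγsph, l₁, l₂, l₃, hl₁, hl₂, hl₃, heq⟩, rfl⟩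
  -- γ lies in the span S
  have hγS : γ ∈ S := by
    have h3 : l₃ • γ = -(l₁ • γ₁ + l₂ • γ₂) := by
      rw [add_comm (l₁ • γ₁ + l₂ • γ₂) (l₃ • γ)] at heq
      exact eq_neg_of_add_eq_zero_left heq
    have hmem : l₁ • γ₁ + l₂ • γ₂ ∈ S :=
      Submodule.add_mem _
        (Submodule.smul_mem _ _ (Submodule.subset_span (by simp)))
        (Submodule.smul_mem _ _ (Submodule.subset_span (by simp)))
    have : γ = l₃⁻¹ • (l₃ • γ) := (inv_smul_smul₀ hl₃.ne' γ).symm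
    rw [this, h3]
    exact Submodule.smul_mem _ _ (Submodule.neg_mem _ hmem)
  -- inner product bound
  have hγnorm : ‖γ‖ = 1 := hγsph
  have hwγ : ⟪w, γ⟫ = 0 := by
    rw [real_inner_comm]
    exact Submodule.inner_right_of_mem_orthogonal hγS hwmem
  have hinner : ⟪γ₃, γ⟫ ≤ ‖u‖ := by
    rw [hdecomp, inner_add_left, hwγ, add_zero]
    calc ⟪u, γ⟫ ≤ ‖u‖ * ‖γ‖ := real_inner_le_norm u γ
      _ = ‖u‖ := by rw [hγnorm, mul_one]
  have hinner1 : -1 ≤ ⟪γ₃, γ⟫ := by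
    have h := abs_real_inner_le_norm γ₃ γ
    rw [hnorm3, hγnorm, one_mul] at h
    linarith [abs_le.mp h]
  -- cos ‖w‖ ≥ ‖u‖
  have hcos : ⟪γ₃, γ⟫ ≤ Real.cos ‖w‖ := by
    have hsin1 : Real.sin ‖w‖ ≤ ‖w‖ := Real.sin_le ha0
    have hsin0 : 0 ≤ Real.sin ‖w‖ :=
      Real.sin_nonneg_of_nonneg_of_le_pi ha0 (by linarith)
    have hcos0 : 0 ≤ Real.cos ‖w‖ :=
      Real.cos_nonneg_of_mem_Icc ⟨by linarith, by linarith⟩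
    have hsq := Real.sin_sq_add_cos_sq ‖w‖
    have hub : ‖u‖ ≤ Real.cos ‖w‖ := by nlinarith [norm_nonneg u]
    linarith
  exact arccos_ge_of_le_cos hinner1 ha0 (by linarith) hcos
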